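/- (Gowers) Let G be a finite group of order n, and let δ > 0 be a real number such that every nonzero finite-dimensional real representation of G having no nonzero G-invariant vector has dimension at least δ. If A, B, C are subsets of G such that there is no true equation ab = c with a ∈ A, b ∈ B, c ∈ C, then #A · #B · #C · δ ≤ n³. -/

import Mathlib

open Finset RealInnerProductSpace

noncomputable section GowersAux

set_option linter.unusedSectionVars false

variable {G : Type} [Group G] [Fintype G] [DecidableEq G]

/-- convolution operator `u ↦ (x ↦ ∑ y, f (y⁻¹ x) u y)` on `EuclideanSpace ℝ G`. -/
def convE (f : G → ℝ) : EuclideanSpace ℝ G →ₗ[ℝ] EuclideanSpace ℝ G where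
  toFun u := WithLp.toLp 2 (fun x => ∑ y, f (y⁻¹ * x) * u y)
  map_add' u v := by
    ext x
    simp [mul_add, Finset.sum_add_distrib]
  map_smul' c u := by
    ext x
    simp only [PiLp.toLp_apply, PiLp.smul_apply, smul_eq_mul, RingHom.id_apply, Finset.mul_sum]
    exact Finset.sum_congr rfl fun y _ => by ring

@[simp] lemma convE_apply (f : G → ℝ) (u : EuclideanSpace ℝ G) (x : G) :
    convE f u x = ∑ y, f (y⁻¹ * x) * u y := rfl

/-- left translation operator -/
def translE (g : G) : EuclideanSpace ℝ G →ₗ[ℝ] EuclideanSpace ℝ G where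
  toFun u := WithLp.toLp 2 (fun x => u (g⁻¹ * x))
  map_add' u v := by ext x; simp
  map_smul' c u := by ext x; simp

@[simp] lemma translE_apply (g : G) (u : EuclideanSpace ℝ G) (x : G) :
    translE g u x = u (g⁻¹ * x) := rfl

lemma translE_one : translE (1 : G) = LinearMap.id := by
  ext u x; exact congrArg u.ofLp (by group)

lemma translE_mul (g h : G) :
    translE (g * h) = (translE g) ∘ₗ (translE h) := by
  ext u x; exact congrArg u.ofLp (by group)

/-- view a plain function as an element of `EuclideanSpace`. -/
def toE (g : G → ℝ) : EuclideanSpace ℝ G := WithLp.toLp 2 g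

@[simp] lemma toE_apply (g : G → ℝ) (y : G) : toE g y = g y := rfl

lemma inner_eq_sum (u v : EuclideanSpace ℝ G) : ⟪u, v⟫ = ∑ x, u x * v x := by
  simp [PiLp.inner_apply, RCLike.inner_apply, mul_comm]

lemma convE_translE (f : G → ℝ) (g : G) :
    (convE f) ∘ₗ (translE g) = (translE g) ∘ₗ (convE f) := by
  ext u x
  simp only [LinearMap.comp_apply, convE_apply, translE_apply]
  rw [← Equiv.sum_comp (Equiv.mulLeft g)]
  simp only [Equiv.coe_mulLeft, mul_inv_rev]
  refine Finset.sum_congr rfl fun z _ => ?_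
  rw [inv_mul_cancel_left, mul_assoc]

lemma inner_convE (f : G → ℝ) (u v : EuclideanSpace ℝ G) :
    ⟪convE f u, v⟫ = ⟪u, convE (fun x => f x⁻¹) v⟫ := by
  simp only [inner_eq_sum, convE_apply, inv_inv, mul_inv_rev, Finset.sum_mul, Finset.mul_sum]
  rw [Finset.sum_comm]
  exact Finset.sum_congr rfl fun y _ => Finset.sum_congr rfl fun x _ => by ring

/-- `T f = S* S` where `S = convE f`. -/
def convT (f : G → ℝ) : EuclideanSpace ℝ G →ₗ[ℝ] EuclideanSpace ℝ G :=
  (convE (fun x => f x⁻¹)) ∘ₗ (convE f)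

lemma inner_convT (f : G → ℝ) (u v : EuclideanSpace ℝ G) :
    ⟪convT f u, v⟫ = ⟪convE f u, convE f v⟫ := by
  rw [convT, LinearMap.comp_apply, inner_convE]
  simp only [inv_inv]

lemma convT_isSymmetric (f : G → ℝ) : (convT f).IsSymmetric := by
  intro u v
  rw [inner_convT, real_inner_comm (convT f v) u, inner_convT, real_inner_comm]

lemma convT_translE (f : G → ℝ) (g : G) :
    (convT f) ∘ₗ (translE g) = (translE g) ∘ₗ (convT f) := by
  rw [convT, LinearMap.comp_assoc, convE_translE, ← LinearMap.comp_assoc, convE_translE,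
    LinearMap.comp_assoc]

end GowersAux

theorem gowers_product_bound {G : Type} [Group G] [Fintype G]
    (δ : ℝ) (hδ : 0 < δ)
    (hrep : ∀ (V : Type) [AddCommGroup V] [Module ℝ V] [FiniteDimensional ℝ V]
      (ρ : Representation ℝ G V), Nontrivial V →
      (∀ v : V, (∀ g : G, ρ g v = v) → v = 0) →
      δ ≤ Module.finrank ℝ V)
    (A B C : Finset G)
    (hABC : ∀ a ∈ A, ∀ b ∈ B, ∀ c ∈ C, a * b ≠ c) :
    (A.card : ℝ) * B.card * C.card * δ ≤ (Fintype.card G : ℝ) ^ 3 := by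
  classical
  have hn0 : (0:ℝ) < Fintype.card G := by
    exact_mod_cast Fintype.card_pos
  have hRHS : (0:ℝ) ≤ (Fintype.card G : ℝ) ^ 3 := by positivity
  rcases A.eq_empty_or_nonempty with rfl | hA
  · simpa using hRHS
  rcases B.eq_empty_or_nonempty with rfl | hB
  · simpa using hRHS
  rcases C.eq_empty_or_nonempty with rfl | hC
  · simpa using hRHS
  obtain ⟨x₀, hx₀⟩ : ∃ x, x ∉ B := by
    by_contra h
    push_neg at h
    obtain ⟨a, ha⟩ := hA
    obtain ⟨c, hc⟩ := hC
    exact hABC a ha (a⁻¹ * c) (h _) c hc (by group)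
  set n : ℕ := Fintype.card G with hn
  set β : ℝ := (B.card : ℝ) / n with hβ
  have hβpos : 0 < β := by
    apply div_pos _ hn0
    exact_mod_cast hB.card_pos
  set f : G → ℝ := fun x => (if x ∈ B then (1:ℝ) else 0) - β with hfdef
  have hone : ∑ x : G, (if x ∈ B then (1:ℝ) else 0) = B.card := by
    simp [Finset.sum_ite_mem]
  have hcardn : (Finset.univ : Finset G).card = n := by
    rw [Finset.card_univ, hn]
  have hnne : (n:ℝ) ≠ 0 := ne_of_gt hn0
  have hsumf : ∑ x, f x = 0 := by
    simp only [hfdef, Finset.sum_sub_distrib, hone, Finset.sum_const, hcardn, nsmul_eq_mul]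
    rw [hβ]
    field_simp
    ring
  have hnormf : ∑ x, f x * f x ≤ (B.card : ℝ) := by
    have hid : ∀ x : G, f x * f x
        = (if x ∈ B then (1:ℝ) else 0) - 2 * β * (if x ∈ B then (1:ℝ) else 0) + β ^ 2 := by
      intro x
      rw [hfdef]
      by_cases h : x ∈ B <;> simp [h] <;> ring
    have hsum : ∑ x, f x * f x = (B.card : ℝ) - 2 * β * B.card + n * β ^ 2 := by
      rw [Finset.sum_congr rfl fun x _ => hid x]
      rw [Finset.sum_add_distrib, Finset.sum_sub_distrib, hone, ← Finset.mul_sum, hone,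
        Finset.sum_const, hcardn, nsmul_eq_mul]
    have hβB : (n:ℝ) * β ^ 2 = β * B.card := by
      rw [hβ]; field_simp
    have hβBnn : 0 ≤ β * B.card := by positivity
    rw [hsum, hβB]
    linarith
  have hnormfpos : 0 < ∑ x, f x * f x := by
    have h1 : ∀ x ∈ Finset.univ, 0 ≤ f x * f x := fun x _ => mul_self_nonneg _
    have h2 : 0 < f x₀ * f x₀ := by
      have : f x₀ = -β := by simp [hfdef, hx₀]
      rw [this]; nlinarith
    exact lt_of_lt_of_le h2 (Finset.single_le_sum h1 (Finset.mem_univ x₀))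
  set S := convE (G := G) f with hS
  set T := convT (G := G) f with hT'
  have hT : T.IsSymmetric := convT_isSymmetric f
  have hfin : Module.finrank ℝ (EuclideanSpace ℝ G) = n := by
    simp [finrank_euclideanSpace, hn]
  set b := hT.eigenvectorBasis hfin with hb
  set μ := hT.eigenvalues hfin with hμ
  have heig : ∀ i, T (b i) = μ i • b i := fun i => hT.apply_eigenvectorBasis hfin i
  have hbnorm : ∀ i, ⟪b i, b i⟫ = 1 := by
    intro i
    rw [real_inner_self_eq_norm_sq, b.orthonormal.1 i]
    norm_num
  have hμval : ∀ i, μ i = ⟪S (b i), S (b i)⟫ := by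
    intro i
    rw [← inner_convT, ← hT', heig i, real_inner_smul_left, hbnorm, mul_one]
  have hμ0 : ∀ i, 0 ≤ μ i := fun i => (hμval i) ▸ real_inner_self_nonneg
  -- trace identity
  have hreindex : ∀ x : G, ∑ y : G, f (y⁻¹ * x) * f (y⁻¹ * x) = ∑ z : G, f z * f z := by
    intro x
    rw [← Equiv.sum_comp ((Equiv.inv G).trans (Equiv.mulRight x)) (fun z => f z * f z)]
    simp [Equiv.trans_apply]
  have htrace : ∑ i, μ i = (n : ℝ) * ∑ x, f x * f x := by
    calc ∑ i, μ i = ∑ i, ∑ x : G, S (b i) x * S (b i) x := by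
          refine Finset.sum_congr rfl fun i _ => ?_
          rw [hμval i, inner_eq_sum]
      _ = ∑ x : G, ∑ i, ⟪toE (fun y => f (y⁻¹ * x)), b i⟫
            * ⟪b i, toE (fun y => f (y⁻¹ * x))⟫ := by
          rw [Finset.sum_comm]
          refine Finset.sum_congr rfl fun x _ => Finset.sum_congr rfl fun i _ => ?_
          have hSx : S (b i) x = ⟪toE (fun y => f (y⁻¹ * x)), b i⟫ := by
            rw [inner_eq_sum]; rfl
          rw [hSx, real_inner_comm (b i) (toE (fun y => f (y⁻¹ * x)))]
      _ = ∑ x : G, ⟪toE (fun y => f (y⁻¹ * x)),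
            toE (fun y => f (y⁻¹ * x))⟫ :=
          Finset.sum_congr rfl fun x _ => b.sum_inner_mul_inner _ _
      _ = ∑ x : G, ∑ y : G, f (y⁻¹ * x) * f (y⁻¹ * x) :=
          Finset.sum_congr rfl fun x _ => inner_eq_sum _ _
      _ = ∑ _x : G, ∑ z : G, f z * f z :=
          Finset.sum_congr rfl fun x _ => hreindex x
      _ = (n : ℝ) * ∑ x, f x * f x := by
          rw [Finset.sum_const, hcardn, nsmul_eq_mul]
  -- max eigenvalue
  obtain ⟨i₀, hi₀⟩ : ∃ i₀ : Fin n, ∀ i, μ i ≤ μ i₀ := by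
    have : Nonempty (Fin n) := by
      refine ⟨⟨0, ?_⟩⟩
      exact Fintype.card_pos
    exact Finite.exists_max μ
  set lam := μ i₀ with hlam
  have hlampos : 0 < lam := by
    by_contra h
    push_neg at h
    have : ∑ i, μ i ≤ 0 := Finset.sum_nonpos fun i _ => le_trans (hi₀ i) h
    rw [htrace] at this
    nlinarith
  -- the eigenspace
  set W : Submodule ℝ (EuclideanSpace ℝ G) := Module.End.eigenspace T lam with hW
  have hmemW : ∀ v, v ∈ W ↔ T v = lam • v := fun v => Module.End.mem_eigenspace_iff
  have hWinv : ∀ g : G, ∀ v ∈ W, translE g v ∈ W := by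
    intro g v hv
    rw [hmemW] at hv ⊢
    have hcomm := LinearMap.congr_fun (convT_translE f g) v
    simp only [LinearMap.comp_apply] at hcomm
    rw [← hT'] at hcomm
    rw [hcomm, hv, map_smul]
  set ρ : Representation ℝ G ↥W :=
    { toFun := fun g => (translE g).restrict (hWinv g)
      map_one' := by
        ext v
        simp [LinearMap.restrict_apply, translE_one]
      map_mul' := by
        intro g h
        ext v
        simp [LinearMap.restrict_apply, translE_mul] } with hρ
  have hnontriv : Nontrivial ↥W := by
    have hbW : (b i₀ : EuclideanSpace ℝ G) ∈ W := by
      rw [hmemW]; exact heig i₀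
    refine nontrivial_of_ne ⟨b i₀, hbW⟩ 0 ?_
    intro h
    have := b.orthonormal.ne_zero i₀
    exact this (by simpa [Subtype.ext_iff] using h)
  have hnoinv : ∀ v : ↥W, (∀ g : G, ρ g v = v) → v = 0 := by
    intro v hvinv
    have htr : ∀ g : G, translE g (v : EuclideanSpace ℝ G) = (v : EuclideanSpace ℝ G) := by
      intro g
      have h0 := hvinv g
      rw [Subtype.ext_iff] at h0
      simpa [hρ, LinearMap.restrict_coe_apply] using h0
    have hconst : ∀ y : G, (v : EuclideanSpace ℝ G) y = (v : EuclideanSpace ℝ G) 1 := by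
      intro y
      have h1 := congrFun (congrArg (fun (w : EuclideanSpace ℝ G) => (w : G → ℝ))
        (htr y)) y
      simp only [translE_apply] at h1
      rw [inv_mul_cancel y] at h1
      exact h1.symm
    have hSv : S (v : EuclideanSpace ℝ G) = 0 := by
      ext x
      rw [hS, convE_apply]
      have : ∑ y, f (y⁻¹ * x) * (v : EuclideanSpace ℝ G) y
          = (∑ y, f (y⁻¹ * x)) * (v : EuclideanSpace ℝ G) 1 := by
        rw [Finset.sum_mul]
        exact Finset.sum_congr rfl fun y _ => by rw [hconst y]
      rw [this]
      have hre : ∑ y : G, f (y⁻¹ * x) = ∑ z : G, f z := by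
        rw [← Equiv.sum_comp ((Equiv.inv G).trans (Equiv.mulRight x)) f]
        simp [Equiv.trans_apply]
      rw [hre, hsumf, zero_mul]
      rfl
    have hTv : T (v : EuclideanSpace ℝ G) = 0 := by
      rw [hT', convT, LinearMap.comp_apply, ← hS, hSv, map_zero]
    have hmem : T (v : EuclideanSpace ℝ G) = lam • (v : EuclideanSpace ℝ G) :=
      (hmemW _).mp v.2
    have : lam • (v : EuclideanSpace ℝ G) = 0 := by rw [← hmem, hTv]
    rcases smul_eq_zero.mp this with h | h
    · exact absurd h (ne_of_gt hlampos)
    · exact Subtype.ext h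
  have hdim : δ ≤ Module.finrank ℝ ↥W := hrep ↥W ρ hnontriv hnoinv
  -- multiplicity bound
  set J : Finset (Fin n) := Finset.univ.filter (fun i => μ i = lam) with hJ
  have hWrank : (Module.finrank ℝ ↥W : ℝ) ≤ (J.card : ℝ) := by
    set s : Finset (EuclideanSpace ℝ G) := J.image (fun i => (b i : EuclideanSpace ℝ G))
      with hs
    have hle : W ≤ Submodule.span ℝ (s : Set (EuclideanSpace ℝ G)) := by
      intro v hv
      rw [hmemW] at hv
      have hcoef : ∀ i, i ∉ J → ⟪b i, v⟫ = 0 := by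
        intro i hiJ
        have h1 : ⟪T (b i), v⟫ = μ i * ⟪b i, v⟫ := by
          rw [heig i, real_inner_smul_left]
        have h2 : ⟪T (b i), v⟫ = lam * ⟪b i, v⟫ := by
          rw [hT (b i) v, hv, real_inner_smul_right]
        have hne : μ i ≠ lam := by
          intro h
          exact hiJ (Finset.mem_filter.mpr ⟨Finset.mem_univ i, h⟩)
        have hzero : (μ i - lam) * ⟪b i, v⟫ = 0 := by
          rw [sub_mul]
          rw [← h1, ← h2]
          ring
        rcases mul_eq_zero.mp hzero with h | h
        · exact absurd (sub_eq_zero.mp h) hne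
        · exact h
      rw [← b.sum_repr' v]
      refine Submodule.sum_mem _ fun i _ => ?_
      by_cases hi : i ∈ J
      · exact Submodule.smul_mem _ _
          (Submodule.subset_span (Finset.mem_coe.mpr (Finset.mem_image_of_mem _ hi)))
      · rw [hcoef i hi, zero_smul]
        exact Submodule.zero_mem _
    have h1 : Module.finrank ℝ ↥W ≤ Module.finrank ℝ ↥(Submodule.span ℝ
        (s : Set (EuclideanSpace ℝ G))) := Submodule.finrank_mono hle
    have h2 := finrank_span_finset_le_card (R := ℝ) s
    have h3 : s.card ≤ J.card := Finset.card_image_le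
    have : Module.finrank ℝ ↥W ≤ J.card := by
      rw [Set.finrank] at h2
      omega
    exact_mod_cast this
  -- Rayleigh bound
  have hrayleigh : ∀ u : EuclideanSpace ℝ G, ⟪S u, S u⟫ ≤ lam * ⟪u, u⟫ := by
    intro w
    have e1 : ⟪S w, S w⟫ = ⟪T w, w⟫ := by
      rw [hT', hS, inner_convT]
    have e2 : ⟪T w, w⟫ = ∑ i, μ i * (⟪b i, w⟫ * ⟪b i, w⟫) := by
      rw [← b.sum_inner_mul_inner (T w) w]
      refine Finset.sum_congr rfl fun i _ => ?_
      have h3 : ⟪T w, b i⟫ = μ i * ⟪b i, w⟫ := by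
        rw [real_inner_comm, ← hT (b i) w, heig i, real_inner_smul_left]
      rw [h3]
      ring
    have e3 : ∑ i, ⟪b i, w⟫ * ⟪b i, w⟫ = ⟪w, w⟫ := by
      rw [← b.sum_inner_mul_inner w w]
      exact Finset.sum_congr rfl fun i _ => by rw [real_inner_comm w (b i)]
    calc ⟪S w, S w⟫ = ∑ i, μ i * (⟪b i, w⟫ * ⟪b i, w⟫) := by rw [e1, e2]
      _ ≤ ∑ i, lam * (⟪b i, w⟫ * ⟪b i, w⟫) :=
          Finset.sum_le_sum fun i _ =>
            mul_le_mul_of_nonneg_right (hi₀ i) (mul_self_nonneg _)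
      _ = lam * ⟪w, w⟫ := by rw [← Finset.mul_sum, e3]
  -- indicator computations
  set u : EuclideanSpace ℝ G := toE (fun x => if x ∈ A then (1:ℝ) else 0) with hu
  have huu : ⟪u, u⟫ = (A.card : ℝ) := by
    rw [inner_eq_sum]
    simp [hu, Finset.sum_ite_mem]
  have hSuC : ∀ c ∈ C, S u c = -(β * A.card) := by
    intro c hc
    rw [hS, convE_apply]
    have h1 : ∀ y : G, f (y⁻¹ * c) * u y = if y ∈ A then -β else 0 := by
      intro y
      by_cases hy : y ∈ A
      · have hnB : y⁻¹ * c ∉ B := fun hb => hABC y hy _ hb c hc (by group)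
        simp [hu, hy, hfdef, hnB]
      · simp [hu, hy]
    rw [Finset.sum_congr rfl fun y _ => h1 y]
    simp [Finset.sum_ite_mem]
    ring
  have hlow : (C.card : ℝ) * (β * A.card)^2 ≤ ⟪S u, S u⟫ := by
    rw [inner_eq_sum]
    calc (C.card : ℝ) * (β * A.card)^2 = ∑ _c ∈ C, (β * A.card)^2 := by
          rw [Finset.sum_const, nsmul_eq_mul]
      _ = ∑ c ∈ C, S u c * S u c := Finset.sum_congr rfl fun c hc => by
          rw [hSuC c hc]; ring
      _ ≤ ∑ x, S u x * S u x :=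
          Finset.sum_le_sum_of_subset_of_nonneg (Finset.subset_univ C)
            (fun x _ _ => mul_self_nonneg _)
  -- assembly
  have hApos : (0:ℝ) < A.card := by exact_mod_cast hA.card_pos
  have hBpos : (0:ℝ) < B.card := by exact_mod_cast hB.card_pos
  have h1 : (C.card : ℝ) * (β * A.card)^2 ≤ lam * A.card := le_trans hlow (by
    rw [← huu]; exact hrayleigh u)
  have hlamle : (C.card : ℝ) * β^2 * A.card ≤ lam := by
    refine le_of_mul_le_mul_right ?_ hApos
    calc (C.card : ℝ) * β^2 * A.card * A.card = (C.card : ℝ) * (β * A.card)^2 := by ring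
      _ ≤ lam * A.card := h1
  have h2 : lam * δ ≤ (n:ℝ) * B.card := by
    have e1 : lam * δ ≤ lam * (J.card : ℝ) :=
      mul_le_mul_of_nonneg_left (le_trans hdim hWrank) (le_of_lt hlampos)
    have e2 : lam * (J.card : ℝ) ≤ ∑ i, μ i := by
      have : lam * (J.card : ℝ) = ∑ i ∈ J, μ i := by
        rw [Finset.sum_congr rfl (fun i hi => show μ i = lam from (Finset.mem_filter.mp hi).2)]
        rw [Finset.sum_const, nsmul_eq_mul, mul_comm]
      rw [this]
      exact Finset.sum_le_sum_of_subset_of_nonneg (Finset.subset_univ J)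
        (fun i _ _ => hμ0 i)
    have e3 : (∑ i, μ i) ≤ (n:ℝ) * B.card := by
      rw [htrace]
      exact mul_le_mul_of_nonneg_left hnormf (by positivity)
    linarith
  have key : δ * ((C.card : ℝ) * β^2 * A.card) ≤ (n:ℝ) * B.card := by
    calc δ * ((C.card : ℝ) * β^2 * A.card) ≤ δ * lam :=
          mul_le_mul_of_nonneg_left hlamle (le_of_lt hδ)
      _ = lam * δ := mul_comm _ _
      _ ≤ (n:ℝ) * B.card := h2
  have hβn : β * (n:ℝ) = B.card := by
    rw [hβ, div_mul_cancel₀ _ hnne]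
  have h3 := mul_le_mul_of_nonneg_right key (le_of_lt (by positivity : (0:ℝ) < (n:ℝ)^2))
  have h4 : δ * ((C.card:ℝ) * β^2 * A.card) * (n:ℝ)^2
      = ((A.card:ℝ) * B.card * C.card * δ) * B.card := by
    rw [← hβn]; ring
  have h5 : (n:ℝ) * B.card * (n:ℝ)^2 = (n:ℝ)^3 * B.card := by ring
  rw [h4, h5] at h3
  exact le_of_mul_le_mul_right h3 hBpos
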